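/- Fix T > 0 and let ψ = (ψ_i)_{i ≥ 1} and ψ̃ = (ψ̃_i)_{i ≥ 1} be sequences of càdlàg paths on [0,T] with ψ_i(0) ≤ 1 and ψ̃_i(0) ≤ 1 for every i. Suppose (φ, η) solves the infinite-dimensional Skorokhod problem for ψ and (φ̃, η̃) solves it for ψ̃. Then, with the weighted norm ‖x‖_∞ := Σ_{i=1}^{∞} 2^{−i} · sup_{t ∈ [0,T]} |x_i(t)| (values in [0,∞]), one has ‖η − η̃‖_∞ ≤ 2·‖ψ − ψ̃‖_∞ and ‖φ − φ̃‖_∞ ≤ 4·‖ψ − ψ̃‖_∞. -/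

import Mathlib

open Set Filter MeasureTheory Topology

/-- A path `ψ : [0,T] → ℝ` is càdlàg: right-continuous on `[0,T)` (within the domain `[0,T]`)
and has left limits (within the domain) at every point of `(0,T]`. -/
def CadlagOn (T : ℝ) (ψ : ℝ → ℝ) : Prop :=
  (∀ t ∈ Ico (0 : ℝ) T, ContinuousWithinAt ψ (Icc t T) t) ∧
  (∀ t ∈ Ioc (0 : ℝ) T, ∃ l : ℝ, Tendsto ψ (nhdsWithin t (Ico 0 t)) (nhds l))

/-- The Lebesgue–Stieltjes measure on `[0,T]` induced by `η` assigns zero mass to the set `A`.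
It is encoded via the (unique) Stieltjes function on `ℝ` obtained by extending `η` from `[0,T]`
to `ℝ` constantly to the left of `0` and to the right of `T`. -/
def ZeroMassOn (T : ℝ) (η : ℝ → ℝ) (A : Set ℝ) : Prop :=
  ∃ f : StieltjesFunction ℝ, (∀ t : ℝ, f t = η (max 0 (min t T))) ∧ f.measure A = 0

/-- `(φ, η)` solves the infinite-dimensional Skorokhod problem on `[0,T]` for `ψ`, associated
with the reflection matrix `R_∞`.  Components are indexed by `ℕ`, where Lean index `i`
corresponds to the paper's coordinate `i + 1` (so `φ 0` is the paper's `φ_1`, etc.), and the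
paper's `η_0 ≡ 0` is built into the equation for the first coordinate. -/
def SolvesSPInf (T : ℝ) (ψ φ η : ℕ → ℝ → ℝ) : Prop :=
  (∀ t ∈ Set.Icc (0 : ℝ) T, φ 0 t = ψ 0 t - η 0 t) ∧
  (∀ i : ℕ, ∀ t ∈ Set.Icc (0 : ℝ) T, φ (i + 1) t = ψ (i + 1) t + η i t - η (i + 1) t) ∧
  (∀ i : ℕ, ∀ t ∈ Set.Icc (0 : ℝ) T, φ i t ≤ 1) ∧
  (∀ i : ℕ, η i 0 = 0 ∧ MonotoneOn (η i) (Set.Icc 0 T) ∧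
    (∀ t ∈ Set.Icc (0 : ℝ) T, ContinuousWithinAt (η i) (Set.Icc t T) t) ∧
    ZeroMassOn T (η i) {t ∈ Set.Icc (0 : ℝ) T | φ i t < 1})

/-- The weighted uniform distance `‖x - y‖_∞ = ∑_{i=1}^∞ 2^{-i} sup_{t ∈ [0,T]} |x_i(t) - y_i(t)|`
on sequences of paths (with values in `[0,∞]`).  Lean index `i` is the paper's coordinate
`i + 1`, whence the weight `2^{-(i+1)}`. -/
noncomputable def wdist (T : ℝ) (x y : ℕ → ℝ → ℝ) : ENNReal :=
  ∑' i : ℕ, (2⁻¹ : ENNReal) ^ (i + 1) *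
    ⨆ t : Set.Icc (0 : ℝ) T, ENNReal.ofReal |x i t - y i t|

/-- Lipschitz property of the infinite-dimensional Skorokhod map in the weighted uniform norm:
`‖η - η̃‖_∞ ≤ 2 ‖ψ - ψ̃‖_∞` and `‖φ - φ̃‖_∞ ≤ 4 ‖ψ - ψ̃‖_∞`. -/
lemma geo1 : ∑' i : ℕ, (2⁻¹ : ENNReal) ^ (i+1) = 1 := by
  have h : ∀ i : ℕ, (2⁻¹ : ENNReal) ^ (i+1) = 2⁻¹ * 2⁻¹ ^ i := fun i => pow_succ' 2⁻¹ i
  rw [tsum_congr h, ENNReal.tsum_mul_left, ENNReal.tsum_geometric, ENNReal.one_sub_inv_two,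
    inv_inv, ENNReal.inv_mul_cancel two_ne_zero ENNReal.ofNat_ne_top]

lemma hshift (j : ℕ) :
    (∑' i : ℕ, if j ≤ i then (2⁻¹ : ENNReal) ^ (i+1) else 0) = (2⁻¹ : ENNReal) ^ j := by
  have hinj : Function.Injective (fun i : ℕ => i + j) := fun a b hab => by simpa using hab
  have hsupp : Function.support (fun i : ℕ => if j ≤ i then (2⁻¹ : ENNReal) ^ (i+1) else 0)
      ⊆ Set.range (fun i : ℕ => i + j) := by
    intro i hi
    simp only [Function.mem_support, ne_eq, ite_eq_right_iff, not_forall] at hi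
    obtain ⟨hji, -⟩ := hi
    exact ⟨i - j, by simp only []; omega⟩
  rw [← hinj.tsum_eq hsupp]
  have h4 : ∀ i : ℕ, (if j ≤ i + j then (2⁻¹ : ENNReal) ^ (i+j+1) else 0)
      = (2⁻¹ : ENNReal) ^ j * (2⁻¹ : ENNReal) ^ (i+1) := by
    intro i
    rw [if_pos (Nat.le_add_left j i), ← pow_add]
    ring_nf
  rw [tsum_congr h4, ENNReal.tsum_mul_left, geo1, mul_one]

lemma auxA0 (T : ℝ) (hT : 0 < T) (χ Φ η : ℝ → ℝ) (hη0 : η 0 = 0)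
    (hφeq : ∀ s ∈ Set.Icc (0:ℝ) T, Φ s = χ s - η s)
    (hzm : ZeroMassOn T η {s ∈ Set.Icc (0:ℝ) T | Φ s < 1})
    {t : ℝ} (ht : t ∈ Set.Icc (0:ℝ) T) {c : ℝ} (hc : 0 ≤ c)
    (hχ : ∀ s ∈ Set.Icc (0:ℝ) t, χ s ≤ 1 + c) : η t ≤ c := by
  obtain ⟨f, hf, hE⟩ := hzm
  have hfs : ∀ s ∈ Set.Icc (0:ℝ) T, f s = η s := by
    intro s hs; rw [hf, min_eq_left hs.2, max_eq_right hs.1]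
  have hf0 : f 0 = 0 := by
    rw [hfs 0 ⟨le_refl 0, hT.le⟩, hη0]
  set B : Set ℝ := {s | s ∈ Set.Ioc (0:ℝ) t ∧ f s ≤ c} with hBdef
  set N : Set ℝ := {s | s ∈ Set.Ioc (0:ℝ) t ∧ c < f s} with hNdef
  have hsubT : ∀ s ∈ Set.Ioc (0:ℝ) t, s ∈ Set.Icc (0:ℝ) T :=
    fun s hs => ⟨hs.1.le, hs.2.trans ht.2⟩
  have hN : f.measure N = 0 := by
    refine measure_mono_null (fun s hs => ?_) hE
    have hsT := hsubT s hs.1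
    refine ⟨hsT, ?_⟩
    rw [hφeq s hsT]
    have h1 : χ s ≤ 1 + c := hχ s ⟨hs.1.1.le, hs.1.2⟩
    have h2 : c < η s := by rw [← hfs s hsT]; exact hs.2
    linarith
  have hBle : f.measure B ≤ ENNReal.ofReal c := by
    rcases B.eq_empty_or_nonempty with hBe | hBne
    · simp [hBe]
    · have hbdd : BddAbove B := ⟨t, fun s hs => hs.1.2⟩
      by_cases hτ : sSup B ∈ B
      · have hsub : B ⊆ Set.Ioc 0 (sSup B) := fun s hs => ⟨hs.1.1, le_csSup hbdd hs⟩
        calc f.measure B ≤ f.measure (Set.Ioc 0 (sSup B)) := measure_mono hsub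
          _ = ENNReal.ofReal (f (sSup B) - f 0) := f.measure_Ioc 0 (sSup B)
          _ ≤ ENNReal.ofReal c := by
              apply ENNReal.ofReal_le_ofReal; rw [hf0]; linarith [hτ.2]
      · have hsub : B ⊆ Set.Ioo 0 (sSup B) := by
          intro s hs
          exact ⟨hs.1.1, lt_of_le_of_ne (le_csSup hbdd hs) (fun hh => hτ (hh ▸ hs))⟩
        have hll : Function.leftLim f (sSup B) ≤ c := by
          have h1 : ∀ u ∈ Set.Iio (sSup B), f u ≤ c := by
            intro u hu
            obtain ⟨s, hsB, hus⟩ := exists_lt_of_lt_csSup hBne hu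
            exact (f.mono hus.le).trans hsB.2
          exact le_of_tendsto (f.mono.tendsto_leftLim (sSup B))
            (eventually_nhdsWithin_of_forall h1)
        calc f.measure B ≤ f.measure (Set.Ioo 0 (sSup B)) := measure_mono hsub
          _ = ENNReal.ofReal (Function.leftLim f (sSup B) - f 0) := f.measure_Ioo
          _ ≤ ENNReal.ofReal c := by apply ENNReal.ofReal_le_ofReal; rw [hf0]; linarith
  have hmain : ENNReal.ofReal (η t) ≤ ENNReal.ofReal c := by
    have h1 : ENNReal.ofReal (η t) = f.measure (Set.Ioc 0 t) := by
      rw [f.measure_Ioc, hf0, hfs t ht, sub_zero]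
    rw [h1]
    calc f.measure (Set.Ioc 0 t) ≤ f.measure (B ∪ N) := by
          apply measure_mono; intro s hs
          rcases le_or_gt (f s) c with hh | hh
          · exact Or.inl ⟨hs, hh⟩
          · exact Or.inr ⟨hs, hh⟩
      _ ≤ f.measure B + f.measure N := measure_union_le B N
      _ ≤ ENNReal.ofReal c + 0 := add_le_add hBle hN.le
      _ = ENNReal.ofReal c := add_zero _
  exact (ENNReal.ofReal_le_ofReal_iff hc).mp hmain

lemma auxA (T : ℝ) (hT : 0 < T) (χ Φ η χ' Φ' η' : ℝ → ℝ)
    (hη0 : η 0 = 0)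
    (hφeq : ∀ s ∈ Set.Icc (0:ℝ) T, Φ s = χ s - η s)
    (hzm : ZeroMassOn T η {s ∈ Set.Icc (0:ℝ) T | Φ s < 1})
    (hη0' : η' 0 = 0) (hmon' : MonotoneOn η' (Set.Icc 0 T))
    (hφeq' : ∀ s ∈ Set.Icc (0:ℝ) T, Φ' s = χ' s - η' s)
    (hφle' : ∀ s ∈ Set.Icc (0:ℝ) T, Φ' s ≤ 1)
    {t : ℝ} (ht : t ∈ Set.Icc (0:ℝ) T) {M : ℝ}
    (hM : ∀ s ∈ Set.Icc (0:ℝ) T, |χ s - χ' s| ≤ M) :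
    η t - η' t ≤ M := by
  have h0T : (0:ℝ) ∈ Set.Icc (0:ℝ) T := ⟨le_refl 0, hT.le⟩
  have hM0 : 0 ≤ M := (abs_nonneg _).trans (hM 0 h0T)
  have hη't : 0 ≤ η' t := by
    have := hmon' h0T ht ht.1; rw [hη0'] at this; exact this
  have key : η t ≤ η' t + M := by
    apply auxA0 T hT χ Φ η hη0 hφeq hzm ht (by linarith)
    intro s hs
    have hsT : s ∈ Set.Icc (0:ℝ) T := ⟨hs.1, hs.2.trans ht.2⟩
    have h1 : χ s - χ' s ≤ M := (abs_le.mp (hM s hsT)).2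
    have h2 : χ' s - η' s ≤ 1 := by rw [← hφeq' s hsT]; exact hφle' s hsT
    have h3 : η' s ≤ η' t := hmon' hsT ht hs.2
    linarith
  linarith

lemma auxB (T : ℝ) (hT : 0 < T) (χ Φ η χ' Φ' η' : ℝ → ℝ)
    (hη0 : η 0 = 0) (hmon : MonotoneOn η (Set.Icc 0 T))
    (hφeq : ∀ s ∈ Set.Icc (0:ℝ) T, Φ s = χ s - η s)
    (hφle : ∀ s ∈ Set.Icc (0:ℝ) T, Φ s ≤ 1)
    (hzm : ZeroMassOn T η {s ∈ Set.Icc (0:ℝ) T | Φ s < 1})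
    (hη0' : η' 0 = 0) (hmon' : MonotoneOn η' (Set.Icc 0 T))
    (hφeq' : ∀ s ∈ Set.Icc (0:ℝ) T, Φ' s = χ' s - η' s)
    (hφle' : ∀ s ∈ Set.Icc (0:ℝ) T, Φ' s ≤ 1)
    (hzm' : ZeroMassOn T η' {s ∈ Set.Icc (0:ℝ) T | Φ' s < 1}) :
    (⨆ t : Set.Icc (0:ℝ) T, ENNReal.ofReal |η ↑t - η' ↑t|) ≤
      ⨆ t : Set.Icc (0:ℝ) T, ENNReal.ofReal |χ ↑t - χ' ↑t| := by
  set S := ⨆ t : Set.Icc (0:ℝ) T, ENNReal.ofReal |χ ↑t - χ' ↑t| with hS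
  by_cases htop : S = ⊤
  · rw [htop]; exact le_top
  apply iSup_le
  rintro ⟨t, ht⟩
  have hM : ∀ s ∈ Set.Icc (0:ℝ) T, |χ s - χ' s| ≤ S.toReal := by
    intro s hs
    have h1 : ENNReal.ofReal |χ s - χ' s| ≤ S :=
      le_iSup (fun u : Set.Icc (0:ℝ) T => ENNReal.ofReal |χ ↑u - χ' ↑u|) ⟨s, hs⟩
    have h2 := ENNReal.toReal_mono htop h1
    rwa [ENNReal.toReal_ofReal (abs_nonneg _)] at h2
  have h1 : η t - η' t ≤ S.toReal :=
    auxA T hT χ Φ η χ' Φ' η' hη0 hφeq hzm hη0' hmon' hφeq' hφle' ht hM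
  have h2 : η' t - η t ≤ S.toReal :=
    auxA T hT χ' Φ' η' χ Φ η hη0' hφeq' hzm' hη0 hmon hφeq hφle ht
      (fun s hs => by rw [abs_sub_comm]; exact hM s hs)
  have h3 : |η t - η' t| ≤ S.toReal := abs_sub_le_iff.mpr ⟨h1, h2⟩
  calc ENNReal.ofReal |η t - η' t| ≤ ENNReal.ofReal S.toReal := ENNReal.ofReal_le_ofReal h3
    _ = S := ENNReal.ofReal_toReal htop

theorem skorokhod_inf_dim_lipschitz (T : ℝ) (hT : 0 < T) (ψ ψ' : ℕ → ℝ → ℝ)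
    (hcad : ∀ i : ℕ, CadlagOn T (ψ i)) (hcad' : ∀ i : ℕ, CadlagOn T (ψ' i))
    (hψ0 : ∀ i : ℕ, ψ i 0 ≤ 1) (hψ0' : ∀ i : ℕ, ψ' i 0 ≤ 1)
    (φ η φ' η' : ℕ → ℝ → ℝ)
    (h : SolvesSPInf T ψ φ η) (h' : SolvesSPInf T ψ' φ' η') :
    wdist T η η' ≤ 2 * wdist T ψ ψ' ∧ wdist T φ φ' ≤ 4 * wdist T ψ ψ' := by
  obtain ⟨heq0, heqS, hle, hprop⟩ := h
  obtain ⟨heq0', heqS', hle', hprop'⟩ := h'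
  set b : ℕ → ENNReal := fun i => ⨆ t : Set.Icc (0:ℝ) T, ENNReal.ofReal |ψ i ↑t - ψ' i ↑t|
    with hbdef
  set a : ℕ → ENNReal := fun i => ⨆ t : Set.Icc (0:ℝ) T, ENNReal.ofReal |η i ↑t - η' i ↑t|
    with hadef
  set p : ℕ → ENNReal := fun i => ⨆ t : Set.Icc (0:ℝ) T, ENNReal.ofReal |φ i ↑t - φ' i ↑t|
    with hpdef
  set w : ℕ → ENNReal := fun i => (2⁻¹ : ENNReal) ^ (i+1) with hwdef
  have hwη : wdist T η η' = ∑' i, w i * a i := rfl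
  have hwψ : wdist T ψ ψ' = ∑' i, w i * b i := rfl
  have hwφ : wdist T φ φ' = ∑' i, w i * p i := rfl
  -- coordinate estimates
  have key0 : a 0 ≤ b 0 :=
    auxB T hT (ψ 0) (φ 0) (η 0) (ψ' 0) (φ' 0) (η' 0)
      (hprop 0).1 (hprop 0).2.1 heq0 (hle 0) (hprop 0).2.2.2
      (hprop' 0).1 (hprop' 0).2.1 heq0' (hle' 0) (hprop' 0).2.2.2
  have keyS : ∀ i, a (i+1) ≤ b (i+1) + a i := by
    intro i
    have hB := auxB T hT (fun s => ψ (i+1) s + η i s) (φ (i+1)) (η (i+1))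
      (fun s => ψ' (i+1) s + η' i s) (φ' (i+1)) (η' (i+1))
      (hprop (i+1)).1 (hprop (i+1)).2.1
      (fun s hs => by rw [heqS i s hs]) (hle (i+1)) (hprop (i+1)).2.2.2
      (hprop' (i+1)).1 (hprop' (i+1)).2.1
      (fun s hs => by rw [heqS' i s hs]) (hle' (i+1)) (hprop' (i+1)).2.2.2
    refine hB.trans (iSup_le ?_)
    rintro ⟨t, ht⟩
    have tri : |(ψ (i+1) t + η i t) - (ψ' (i+1) t + η' i t)|
        ≤ |ψ (i+1) t - ψ' (i+1) t| + |η i t - η' i t| := by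
      have h1 : (ψ (i+1) t + η i t) - (ψ' (i+1) t + η' i t)
          = (ψ (i+1) t - ψ' (i+1) t) + (η i t - η' i t) := by ring
      rw [h1]; exact abs_add_le _ _
    calc ENNReal.ofReal |(ψ (i+1) t + η i t) - (ψ' (i+1) t + η' i t)|
        ≤ ENNReal.ofReal (|ψ (i+1) t - ψ' (i+1) t| + |η i t - η' i t|) :=
          ENNReal.ofReal_le_ofReal tri
      _ ≤ ENNReal.ofReal |ψ (i+1) t - ψ' (i+1) t| + ENNReal.ofReal |η i t - η' i t| :=
          ENNReal.ofReal_add_le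
      _ ≤ b (i+1) + a i := add_le_add
          (le_iSup (fun u : Set.Icc (0:ℝ) T => ENNReal.ofReal |ψ (i+1) ↑u - ψ' (i+1) ↑u|) ⟨t, ht⟩)
          (le_iSup (fun u : Set.Icc (0:ℝ) T => ENNReal.ofReal |η i ↑u - η' i ↑u|) ⟨t, ht⟩)
  have hcum : ∀ i, a i ≤ ∑ j ∈ Finset.range (i+1), b j := by
    intro i
    induction i with
    | zero => simpa using key0
    | succ k ih =>
      calc a (k+1) ≤ b (k+1) + a k := keyS k
        _ ≤ b (k+1) + ∑ j ∈ Finset.range (k+1), b j := add_le_add_right ih _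
        _ = ∑ j ∈ Finset.range (k+2), b j := by rw [Finset.sum_range_succ b (k+1)]; exact add_comm _ _
  -- part 1
  have part1 : (∑' i, w i * a i) ≤ 2 * ∑' i, w i * b i := by
    calc ∑' i, w i * a i
        ≤ ∑' i, w i * ∑ j ∈ Finset.range (i+1), b j :=
          ENNReal.tsum_le_tsum fun i => mul_le_mul_right (hcum i) _
      _ = ∑' i, ∑' j, (if j ≤ i then w i * b j else 0) := by
          refine tsum_congr fun i => ?_
          rw [Finset.mul_sum]
          rw [tsum_eq_sum (s := Finset.range (i+1))
            (fun j hj => if_neg (fun hle2 => hj (Finset.mem_range.mpr (Nat.lt_succ_of_le hle2))))]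
          exact (Finset.sum_congr rfl fun j hj =>
            if_pos (Nat.lt_succ_iff.mp (Finset.mem_range.mp hj))).symm
      _ = ∑' j, ∑' i, (if j ≤ i then w i * b j else 0) := ENNReal.tsum_comm
      _ = ∑' j, (2⁻¹ : ENNReal)^j * b j := by
          refine tsum_congr fun j => ?_
          have hsplit : ∀ i, (if j ≤ i then w i * b j else 0) = (if j ≤ i then w i else 0) * b j := by
            intro i; split_ifs <;> simp
          rw [tsum_congr hsplit, ENNReal.tsum_mul_right, hwdef, hshift j]
      _ = ∑' j, 2 * (w j * b j) := by
          refine tsum_congr fun j => ?_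
          rw [← mul_assoc]
          congr 1
          rw [hwdef]
          simp only []
          rw [pow_succ' (2⁻¹ : ENNReal) j, ← mul_assoc,
            ENNReal.mul_inv_cancel two_ne_zero ENNReal.ofNat_ne_top, one_mul]
      _ = 2 * ∑' j, w j * b j := ENNReal.tsum_mul_left
  refine ⟨by rw [hwη, hwψ]; exact part1, ?_⟩
  -- part 2
  have hp0 : p 0 ≤ b 0 + a 0 := by
    refine iSup_le ?_
    rintro ⟨t, ht⟩
    have heq : φ 0 t - φ' 0 t = (ψ 0 t - ψ' 0 t) + -(η 0 t - η' 0 t) := by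
      rw [heq0 t ht, heq0' t ht]; ring
    calc ENNReal.ofReal |φ 0 t - φ' 0 t|
        ≤ ENNReal.ofReal (|ψ 0 t - ψ' 0 t| + |η 0 t - η' 0 t|) := by
          apply ENNReal.ofReal_le_ofReal
          rw [heq]
          exact (abs_add_le _ _).trans (by rw [abs_neg])
      _ ≤ ENNReal.ofReal |ψ 0 t - ψ' 0 t| + ENNReal.ofReal |η 0 t - η' 0 t| :=
          ENNReal.ofReal_add_le
      _ ≤ b 0 + a 0 := add_le_add
          (le_iSup (fun u : Set.Icc (0:ℝ) T => ENNReal.ofReal |ψ 0 ↑u - ψ' 0 ↑u|) ⟨t, ht⟩)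
          (le_iSup (fun u : Set.Icc (0:ℝ) T => ENNReal.ofReal |η 0 ↑u - η' 0 ↑u|) ⟨t, ht⟩)
  have hpS : ∀ i, p (i+1) ≤ b (i+1) + (a i + a (i+1)) := by
    intro i
    refine iSup_le ?_
    rintro ⟨t, ht⟩
    have heq : φ (i+1) t - φ' (i+1) t
        = (ψ (i+1) t - ψ' (i+1) t) + (η i t - η' i t) + -(η (i+1) t - η' (i+1) t) := by
      rw [heqS i t ht, heqS' i t ht]; ring
    calc ENNReal.ofReal |φ (i+1) t - φ' (i+1) t|
        ≤ ENNReal.ofReal (|ψ (i+1) t - ψ' (i+1) t| + |η i t - η' i t| + |η (i+1) t - η' (i+1) t|) := by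
          apply ENNReal.ofReal_le_ofReal
          rw [heq]
          exact (abs_add_three _ _ _).trans (by rw [abs_neg])
      _ ≤ ENNReal.ofReal (|ψ (i+1) t - ψ' (i+1) t| + |η i t - η' i t|)
            + ENNReal.ofReal |η (i+1) t - η' (i+1) t| := ENNReal.ofReal_add_le
      _ ≤ (ENNReal.ofReal |ψ (i+1) t - ψ' (i+1) t| + ENNReal.ofReal |η i t - η' i t|)
            + ENNReal.ofReal |η (i+1) t - η' (i+1) t| :=
          add_le_add_left ENNReal.ofReal_add_le _
      _ ≤ (b (i+1) + a i) + a (i+1) := by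
          refine add_le_add (add_le_add ?_ ?_) ?_
          · exact le_iSup (fun u : Set.Icc (0:ℝ) T =>
              ENNReal.ofReal |ψ (i+1) ↑u - ψ' (i+1) ↑u|) ⟨t, ht⟩
          · exact le_iSup (fun u : Set.Icc (0:ℝ) T =>
              ENNReal.ofReal |η i ↑u - η' i ↑u|) ⟨t, ht⟩
          · exact le_iSup (fun u : Set.Icc (0:ℝ) T =>
              ENNReal.ofReal |η (i+1) ↑u - η' (i+1) ↑u|) ⟨t, ht⟩
      _ = b (i+1) + (a i + a (i+1)) := by ring
  -- the shifted η-sum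
  set r : ℕ → ENNReal := fun i => Nat.rec 0 (fun k _ => a k) i with hrdef
  have hpq : ∀ i, p i ≤ b i + (r i + a i) := by
    intro i
    cases i with
    | zero =>
      have hr0 : r 0 = 0 := rfl
      rw [hr0, zero_add]
      exact hp0
    | succ k => exact hpS k
  have hrsum : ∑' i, w i * r i = 2⁻¹ * ∑' i, w i * a i := by
    have hinj : Function.Injective (fun i : ℕ => i + 1) := fun x y hxy => by simpa using hxy
    have hsupp : Function.support (fun i : ℕ => w i * r i) ⊆ Set.range (fun i : ℕ => i + 1) := by
      intro i hi
      cases i with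
      | zero => simp [hrdef] at hi
      | succ k => exact ⟨k, rfl⟩
    rw [← hinj.tsum_eq hsupp]
    have : ∀ i : ℕ, w (i+1) * r (i+1) = 2⁻¹ * (w i * a i) := by
      intro i
      have : w (i+1) = 2⁻¹ * w i := by rw [hwdef]; simp only []; ring
      rw [this]
      simp only [hrdef]
      ring
    rw [tsum_congr this, ENNReal.tsum_mul_left]
  have part2 : ∑' i, w i * p i ≤ 4 * ∑' i, w i * b i := by
    calc ∑' i, w i * p i
        ≤ ∑' i, w i * (b i + (r i + a i)) :=
          ENNReal.tsum_le_tsum fun i => mul_le_mul_right (hpq i) _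
      _ = ∑' i, (w i * b i + (w i * r i + w i * a i)) := by
          refine tsum_congr fun i => ?_; ring
      _ = (∑' i, w i * b i) + ((∑' i, w i * r i) + ∑' i, w i * a i) := by
          rw [ENNReal.tsum_add, ENNReal.tsum_add]
      _ = (∑' i, w i * b i) + (2⁻¹ * (∑' i, w i * a i) + ∑' i, w i * a i) := by rw [hrsum]
      _ ≤ (∑' i, w i * b i) + (2⁻¹ * (2 * ∑' i, w i * b i) + 2 * ∑' i, w i * b i) := by
          refine add_le_add_right (add_le_add (mul_le_mul_right part1 _) part1) _
      _ = (1 + (2⁻¹ * 2 + 2)) * ∑' i, w i * b i := by ring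
      _ = 4 * ∑' i, w i * b i := by
          rw [ENNReal.inv_mul_cancel two_ne_zero ENNReal.ofNat_ne_top]
          norm_num
  rw [hwφ, hwψ]
  exact part2
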